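/- Every 3×3 doubly nonnegative matrix of full rank 3 is completely positive with cp-rank 3. -/

import Mathlib

open Matrix BigOperators

def Matrix.IsCP {n : Type*} [Fintype n] (A : Matrix n n ℝ) : Prop :=
  ∃ (m : ℕ) (B : Matrix (Fin m) n ℝ), (∀ i j, 0 ≤ B i j) ∧ A = Bᵀ * B

noncomputable def Matrix.cpRank {n : Type*} [Fintype n] (A : Matrix n n ℝ) : ℕ :=
  sInf {m | ∃ B : Matrix (Fin m) n ℝ, (∀ i j, 0 ≤ B i j) ∧ A = Bᵀ * B}

lemma BtB3 (p q r s t u : ℝ) :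
    (!![p,q,r;0,s,t;0,0,u] : Matrix (Fin 3) (Fin 3) ℝ)ᵀ * !![p,q,r;0,s,t;0,0,u]
    = !![p*p, p*q, p*r; p*q, q*q+s*s, q*r+s*t; p*r, q*r+s*t, r*r+t*t+u*u] := by
  have hT : (!![p,q,r;0,s,t;0,0,u] : Matrix (Fin 3) (Fin 3) ℝ)ᵀ = !![p,0,0;q,s,0;r,t,u] := by
    ext i j; fin_cases i <;> fin_cases j <;> rfl
  rw [hT, Matrix.mul_fin_three]
  ext i j; fin_cases i <;> fin_cases j <;> simp <;> ring

/-- Explicit nonnegative Cholesky factorization of a 3×3 positive definite doubly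
nonnegative matrix satisfying the key inequality `b*c ≤ a*e`. -/
lemma chol3 (a b c d e f : ℝ) (ha : 0 < a) (hb : 0 ≤ b) (hc : 0 ≤ c)
    (m1 : b * b < a * d) (m2 : c * c < a * f)
    (hdet : 0 < a * (d * f - e * e) - b * (b * f - c * e) + c * (b * e - c * d))
    (hkey : b * c ≤ a * e) :
    ∃ B : Matrix (Fin 3) (Fin 3) ℝ, (∀ i j, 0 ≤ B i j) ∧
      (!![a,b,c;b,d,e;c,e,f] : Matrix (Fin 3) (Fin 3) ℝ) = Bᵀ * B := by
  obtain ⟨p, hp_def⟩ : ∃ p, p = Real.sqrt a := ⟨_, rfl⟩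
  have hp : 0 < p := hp_def ▸ Real.sqrt_pos.mpr ha
  have hpp : p * p = a := hp_def ▸ Real.mul_self_sqrt ha.le
  obtain ⟨q, hq_def⟩ : ∃ q, q = b / p := ⟨_, rfl⟩
  obtain ⟨r, hr_def⟩ : ∃ r, r = c / p := ⟨_, rfl⟩
  have hq : 0 ≤ q := hq_def ▸ div_nonneg hb hp.le
  have hr : 0 ≤ r := hr_def ▸ div_nonneg hc hp.le
  have hqq : q * q = b * b / a := by rw [hq_def, div_mul_div_comm, hpp]
  have hrr : r * r = c * c / a := by rw [hr_def, div_mul_div_comm, hpp]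
  have hqr : q * r = b * c / a := by rw [hq_def, hr_def, div_mul_div_comm, hpp]
  have hdq : 0 < d - q * q := by
    rw [hqq, sub_pos, div_lt_iff₀ ha]; nlinarith
  obtain ⟨s, hs_def⟩ : ∃ s, s = Real.sqrt (d - q * q) := ⟨_, rfl⟩
  have hs : 0 < s := hs_def ▸ Real.sqrt_pos.mpr hdq
  have hss : s * s = d - q * q := hs_def ▸ Real.mul_self_sqrt hdq.le
  obtain ⟨t, ht_def⟩ : ∃ t, t = (e - q * r) / s := ⟨_, rfl⟩
  have ht : 0 ≤ t := by
    rw [ht_def]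
    apply div_nonneg _ hs.le
    rw [hqr, sub_nonneg, div_le_iff₀ ha]; nlinarith
  have hst : s * t = e - q * r := by
    rw [ht_def, mul_div_cancel₀ _ hs.ne']
  have hu0 : 0 ≤ f - r * r - t * t := by
    have h1 : t * t = (e - q * r) * (e - q * r) / (s * s) := by
      rw [ht_def, div_mul_div_comm]
    rw [h1, hss]
    have key : (e - q * r) * (e - q * r) ≤ (f - r * r) * (d - q * q) := by
      have main : (e * a - b * c) * (e * a - b * c) ≤ (f * a - c * c) * (d * a - b * b) := by
        nlinarith [mul_pos ha hdet]
      rw [hqr, hrr, hqq]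
      refine le_of_mul_le_mul_right ?_ (show (0:ℝ) < a * a from mul_pos ha ha)
      calc (e - b * c / a) * (e - b * c / a) * (a * a)
            = (e * a - b * c) * (e * a - b * c) := by field_simp
        _ ≤ (f * a - c * c) * (d * a - b * b) := main
        _ = (f - c * c / a) * (d - b * b / a) * (a * a) := by field_simp
    calc (0:ℝ) ≤ ((f - r * r) * (d - q * q) - (e - q*r) * (e - q*r)) / (d - q * q) :=
          div_nonneg (by linarith) hdq.le
      _ = f - r * r - (e - q * r) * (e - q * r) / (d - q * q) := by
          rw [sub_div, mul_div_assoc, div_self hdq.ne', mul_one]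
  obtain ⟨u, hu_def⟩ : ∃ u, u = Real.sqrt (f - r * r - t * t) := ⟨_, rfl⟩
  have hu : 0 ≤ u := hu_def ▸ Real.sqrt_nonneg _
  have huu : u * u = f - r * r - t * t := hu_def ▸ Real.mul_self_sqrt hu0
  have hpq : p * q = b := by rw [hq_def]; field_simp
  have hpr : p * r = c := by rw [hr_def]; field_simp
  refine ⟨!![p,q,r;0,s,t;0,0,u], ?_, ?_⟩
  · intro i j
    fin_cases i <;> fin_cases j <;>
      simp [Matrix.vecHead, Matrix.vecTail, hp.le, hq, hr, hs.le, ht, hu]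
  · have h22 : q * q + s * s = d := by linarith [hss]
    have h23 : q * r + s * t = e := by linarith [hst]
    have h33 : r * r + t * t + u * u = f := by linarith [huu]
    rw [BtB3, hpp, hpq, hpr, h22, h23, h33]

lemma tri3 (a b c d e f : ℝ) (hb : 0 ≤ b) (hc : 0 ≤ c) (he : 0 ≤ e)
    (ha : 0 ≤ a) (hd : 0 ≤ d) (hf : 0 ≤ f)
    (m1 : b * b < a * d) (m2 : c * c < a * f) (m3 : e * e < d * f)
    (h1 : a * e < b * c) (h2 : d * c < b * e) (h3 : f * b < c * e) : False := by
  have hbp : 0 < b := by nlinarith [mul_nonneg ha he]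
  have hcp : 0 < c := by nlinarith [mul_nonneg ha he]
  have hep : 0 < e := by nlinarith [mul_nonneg hf hb]
  have h12 : (a * e) * (d * c) < (b * c) * (b * e) :=
    mul_lt_mul'' h1 h2 (mul_nonneg ha he) (mul_nonneg hd hc)
  have h123 : (a * e) * (d * c) * (f * b) < (b * c) * (b * e) * (c * e) :=
    mul_lt_mul'' h12 h3 (mul_nonneg (mul_nonneg ha he) (mul_nonneg hd hc)) (mul_nonneg hf hb)
  have m12 : (b * b) * (c * c) < (a * d) * (a * f) :=
    mul_lt_mul'' m1 m2 (mul_nonneg hb hb) (mul_nonneg hc hc)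
  have m123 : (b * b) * (c * c) * (e * e) < (a * d) * (a * f) * (d * f) :=
    mul_lt_mul'' m12 m3 (mul_nonneg (mul_nonneg hb hb) (mul_nonneg hc hc)) (mul_nonneg he he)
  have hY : 0 < b * c * e := by positivity
  nlinarith [h123, m123, hY, mul_pos (mul_pos hbp hcp) hep]

lemma cp_perm3 (A M : Matrix (Fin 3) (Fin 3) ℝ) (σ : Fin 3 → Fin 3)
    (hM : ∀ j k, M (σ j) (σ k) = A j k)
    (C : Matrix (Fin 3) (Fin 3) ℝ) (hC : ∀ i j, 0 ≤ C i j) (hMC : M = Cᵀ * C) :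
    ∃ B : Matrix (Fin 3) (Fin 3) ℝ, (∀ i j, 0 ≤ B i j) ∧ A = Bᵀ * B := by
  refine ⟨C.submatrix id σ, fun i j => hC _ _, ?_⟩
  ext j k
  calc A j k = M (σ j) (σ k) := (hM j k).symm
    _ = (Cᵀ * C) (σ j) (σ k) := by rw [hMC]
    _ = ((C.submatrix id σ)ᵀ * C.submatrix id σ) j k := by
        simp [Matrix.mul_apply, Matrix.submatrix_apply]

theorem stmt_12 (A : Matrix (Fin 3) (Fin 3) ℝ)
    (hnn : ∀ i j, 0 ≤ A i j) (hpsd : A.PosSemidef) (hrank : A.rank = 3) :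
    A.IsCP ∧ A.cpRank = 3 := by
  -- A is positive definite
  have hpd : A.PosDef := by
    have hker : ∀ x : Fin 3 → ℝ, A *ᵥ x = 0 → x = 0 := by
      have htop : LinearMap.range A.mulVecLin = ⊤ := by
        apply Submodule.eq_top_of_finrank_eq
        rw [show Module.finrank ℝ (LinearMap.range A.mulVecLin) = A.rank from rfl, hrank]
        simp
      have hinj : Function.Injective A.mulVecLin :=
        (LinearMap.injective_iff_surjective).mpr (LinearMap.range_eq_top.mp htop)
      intro x hx
      have : A.mulVecLin x = A.mulVecLin 0 := by simpa [Matrix.mulVecLin_apply] using hx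
      exact hinj this
    refine Matrix.PosDef.of_dotProduct_mulVec_pos hpsd.1 fun x hx => ?_
    rcases lt_or_eq_of_le (hpsd.dotProduct_mulVec_nonneg x) with h | h
    · exact h
    · exact absurd (hker x ((hpsd.dotProduct_mulVec_zero_iff x).mp h.symm)) hx
  have hsym : ∀ i j, A j i = A i j := fun i j => by
    simpa using hpsd.1.apply i j
  -- quadratic form facts
  have quad : ∀ x : Fin 3 → ℝ, x ≠ 0 →
      0 < x 0 * (A 0 0 * x 0 + A 0 1 * x 1 + A 0 2 * x 2)
        + x 1 * (A 1 0 * x 0 + A 1 1 * x 1 + A 1 2 * x 2)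
        + x 2 * (A 2 0 * x 0 + A 2 1 * x 1 + A 2 2 * x 2) := by
    intro x hx
    have := hpd.dotProduct_mulVec_pos hx
    simpa [dotProduct, Matrix.mulVec, Fin.sum_univ_three] using this
  have ha : 0 < A 0 0 := by
    have := quad ![1,0,0] (by intro h; simpa using congrFun h 0)
    norm_num [Matrix.cons_val_two, Matrix.vecHead, Matrix.vecTail] at this; linarith
  have hd : 0 < A 1 1 := by
    have := quad ![0,1,0] (by intro h; simpa using congrFun h 1)
    norm_num [Matrix.cons_val_two, Matrix.vecHead, Matrix.vecTail] at this; linarith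
  have hf : 0 < A 2 2 := by
    have := quad ![0,0,1] (by intro h; simpa using congrFun h 2)
    norm_num [Matrix.cons_val_two, Matrix.vecHead, Matrix.vecTail] at this; linarith
  have m1 : A 0 1 * A 0 1 < A 0 0 * A 1 1 := by
    have h := quad ![A 0 1, -(A 0 0), 0]
      (by intro h; have := congrFun h 1; simp at this; exact ha.ne' this)
    norm_num [Matrix.cons_val_two, Matrix.vecHead, Matrix.vecTail] at h
    rw [hsym 0 1] at h
    nlinarith [h, ha]
  have m2 : A 0 2 * A 0 2 < A 0 0 * A 2 2 := by
    have h := quad ![A 0 2, 0, -(A 0 0)]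
      (by intro h; have := congrFun h 2; simp at this; exact ha.ne' this)
    norm_num [Matrix.cons_val_two, Matrix.vecHead, Matrix.vecTail] at h
    rw [hsym 0 2] at h
    nlinarith [h, ha]
  have m3 : A 1 2 * A 1 2 < A 1 1 * A 2 2 := by
    have h := quad ![0, A 1 2, -(A 1 1)]
      (by intro h; have := congrFun h 2; simp at this; exact hd.ne' this)
    norm_num [Matrix.cons_val_two, Matrix.vecHead, Matrix.vecTail] at h
    rw [hsym 1 2] at h
    nlinarith [h, hd]
  have hdet : 0 < A 0 0 * (A 1 1 * A 2 2 - A 1 2 * A 1 2)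
      - A 0 1 * (A 0 1 * A 2 2 - A 0 2 * A 1 2)
      + A 0 2 * (A 0 1 * A 1 2 - A 0 2 * A 1 1) := by
    have h := hpd.det_pos
    rw [Matrix.det_fin_three] at h
    rw [hsym 0 1, hsym 0 2, hsym 1 2] at h
    linarith [h]
  -- the factorization, by cases on which index can lead the Cholesky ordering
  obtain ⟨B, hBnn, hAB⟩ : ∃ B : Matrix (Fin 3) (Fin 3) ℝ,
      (∀ i j, 0 ≤ B i j) ∧ A = Bᵀ * B := by
    rcases le_or_gt (A 0 1 * A 0 2) (A 0 0 * A 1 2) with c1 | c1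
    · obtain ⟨C, hC, hMC⟩ := chol3 (A 0 0) (A 0 1) (A 0 2) (A 1 1) (A 1 2) (A 2 2)
        ha (hnn 0 1) (hnn 0 2) m1 m2 hdet c1
      exact cp_perm3 A _ id
        (by intro j k; fin_cases j <;> fin_cases k <;>
          simp [hsym 0 1, hsym 0 2, hsym 1 2]) C hC hMC
    rcases le_or_gt (A 0 1 * A 1 2) (A 1 1 * A 0 2) with c2 | c2
    · obtain ⟨C, hC, hMC⟩ := chol3 (A 1 1) (A 0 1) (A 1 2) (A 0 0) (A 0 2) (A 2 2)
        hd (hnn 0 1) (hnn 1 2) (by linarith [m1]) (by linarith [m3])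
        (by linarith [hdet]) c2
      exact cp_perm3 A _ ![1,0,2]
        (by intro j k; fin_cases j <;> fin_cases k <;>
          simp [hsym 0 1, hsym 0 2, hsym 1 2]) C hC hMC
    rcases le_or_gt (A 0 2 * A 1 2) (A 2 2 * A 0 1) with c3 | c3
    · obtain ⟨C, hC, hMC⟩ := chol3 (A 2 2) (A 1 2) (A 0 2) (A 1 1) (A 0 1) (A 0 0)
        hf (hnn 1 2) (hnn 0 2) (by linarith [m3]) (by linarith [m2])
        (by linarith [hdet]) (by linarith [c3])
      exact cp_perm3 A _ ![2,1,0]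
        (by intro j k; fin_cases j <;> fin_cases k <;>
          simp [hsym 0 1, hsym 0 2, hsym 1 2]) C hC hMC
    · exact (tri3 (A 0 0) (A 0 1) (A 0 2) (A 1 1) (A 1 2) (A 2 2)
        (hnn 0 1) (hnn 0 2) (hnn 1 2) ha.le hd.le hf.le m1 m2 m3 c1 c2 c3).elim
  refine ⟨⟨3, B, hBnn, hAB⟩, ?_⟩
  have h3 : 3 ∈ {m | ∃ C : Matrix (Fin m) (Fin 3) ℝ, (∀ i j, 0 ≤ C i j) ∧ A = Cᵀ * C} :=
    ⟨B, hBnn, hAB⟩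
  refine le_antisymm (Nat.sInf_le h3) (le_csInf ⟨3, h3⟩ ?_)
  rintro m ⟨C, -, hC⟩
  calc 3 = A.rank := hrank.symm
    _ ≤ C.rank := by rw [hC]; exact Matrix.rank_mul_le_right _ _
    _ ≤ Fintype.card (Fin m) := C.rank_le_card_height
    _ = m := Fintype.card_fin m
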